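/- For every finite simple graph G, γᵢ(G) ≤ γ_gr(G) ≤ n(G) − δ(G), where n(G) is the order and δ(G) the minimum degree of G. -/

import Mathlib

set_option maxHeartbeats 1000000


open Finset

open scoped Classical

noncomputable section

namespace IndicatedDom

variable {V : Type*} [Fintype V]

/-- Closed neighborhood `N[v]` as a `Finset`. -/
def cnbhd (G : SimpleGraph V) (v : V) : Finset V :=
  insert v (G.neighborFinset v)

/-- `D` is a dominating set of `G`. -/
def Dominates (G : SimpleGraph V) (D : Finset V) : Prop :=
  ∀ u, ∃ v ∈ D, u ∈ cnbhd G v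

/-- The set of vertices not dominated by `D`. -/
def undom (G : SimpleGraph V) (D : Finset V) : Finset V :=
  univ.filter fun u => ∀ v ∈ D, u ∉ cnbhd G v

/-- Game value of the indicated domination game with a fuel parameter:
given the set `D` of vertices selected so far, Dominator indicates an
undominated vertex `u` (minimizing), Staller selects a vertex of `N[u]`
(maximizing); each selection counts one. -/
def giAux (G : SimpleGraph V) : ℕ → Finset V → ℕ
  | 0, _ => 0
  | (fuel+1), D =>
    if h : (undom G D).Nonempty then
      (undom G D).inf' h fun u =>
        (cnbhd G u).sup' ⟨u, Finset.mem_insert_self u _⟩ fun v => giAux G fuel (insert v D) + 1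
    else 0

/-- The indicated domination number `γᵢ(G)`. -/
def indicatedDomNum (G : SimpleGraph V) : ℕ :=
  giAux G (Fintype.card V) ∅

/-- Game value of the standard domination game with a fuel parameter:
`dom = true` means it is Dominator's turn (minimizing); legal moves are
vertices dominating at least one new vertex. -/
def gameAux (G : SimpleGraph V) : ℕ → Bool → Finset V → ℕ
  | 0, _, _ => 0
  | (fuel+1), dom, D =>
    if h : (univ.filter fun v => ∃ u ∈ cnbhd G v, u ∈ undom G D).Nonempty then
      if dom then
        (univ.filter fun v => ∃ u ∈ cnbhd G v, u ∈ undom G D).inf' h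
          fun v => gameAux G fuel false (insert v D) + 1
      else
        (univ.filter fun v => ∃ u ∈ cnbhd G v, u ∈ undom G D).sup' h
          fun v => gameAux G fuel true (insert v D) + 1
    else 0

/-- The game domination number `γ_g(G)` (Dominator starts). -/
def gameDomNum (G : SimpleGraph V) : ℕ :=
  gameAux G (Fintype.card V) true ∅

/-- A minimal dominating set. -/
def IsMinimalDominating (G : SimpleGraph V) (D : Finset V) : Prop :=
  Dominates G D ∧ ∀ D' ⊂ D, ¬ Dominates G D'

/-- The upper domination number `Γ(G)`. -/
def upperDomNum (G : SimpleGraph V) : ℕ :=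
  sSup {k | ∃ D : Finset V, IsMinimalDominating G D ∧ D.card = k}

/-- A dominating (Grundy) sequence: every vertex dominates something new,
and the whole sequence dominates `G`. -/
def IsDominatingSeq (G : SimpleGraph V) (l : List V) : Prop :=
  (∀ i : Fin l.length, ∃ u, u ∈ cnbhd G (l.get i) ∧
      ∀ j : Fin l.length, (j : ℕ) < (i : ℕ) → u ∉ cnbhd G (l.get j)) ∧
    Dominates G l.toFinset

/-- The Grundy domination number `γ_gr(G)`. -/
def grundyDomNum (G : SimpleGraph V) : ℕ :=
  sSup {k | ∃ l : List V, IsDominatingSeq G l ∧ l.length = k}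

/-- The independence number `α(G)`. -/
def indepNum (G : SimpleGraph V) : ℕ :=
  sSup {k | ∃ S : Finset V, (∀ x ∈ S, ∀ y ∈ S, ¬ G.Adj x y) ∧ S.card = k}

/-- `S` is irredundant: every `x ∈ S` has a private neighbor w.r.t. `S`. -/
def Irredundant (G : SimpleGraph V) (S : Finset V) : Prop :=
  ∀ x ∈ S, ∃ w, (∃ v ∈ S, w ∈ cnbhd G v) ∧ ¬ ∃ v ∈ S.erase x, w ∈ cnbhd G v

/-- The upper irredundance number `IR(G)`. -/
def upperIrredNum (G : SimpleGraph V) : ℕ :=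
  sSup {k | ∃ S : Finset V, Irredundant G S ∧ (∀ T, S ⊂ T → ¬ Irredundant G T) ∧ S.card = k}

/-- The star `K_{1,n}` with center `0`. -/
def starGraph (n : ℕ) : SimpleGraph (Fin (n+1)) where
  Adj a b := a ≠ b ∧ (a = 0 ∨ b = 0)
  symm := by constructor; intro a b h; exact ⟨h.1.symm, h.2.symm⟩
  loopless := by constructor; intro a h; exact h.1 rfl

/-- Two copies of `K_n` with a matching joining corresponding vertices of
index `≥ 1` (i.e. `K_n □ K₂` minus the matching edge at index `0`). -/
def Hgraph (n : ℕ) : SimpleGraph (Fin n × Bool) where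
  Adj a b := (a.2 = b.2 ∧ a.1 ≠ b.1) ∨ (a.2 ≠ b.2 ∧ a.1 = b.1 ∧ (a.1 : ℕ) ≠ 0)
  symm := by
    constructor
    rintro ⟨i, s⟩ ⟨j, t⟩ (⟨h1, h2⟩ | ⟨h1, h2, h3⟩)
    · exact Or.inl ⟨h1.symm, h2.symm⟩
    · exact Or.inr ⟨h1.symm, h2.symm, h2 ▸ h3⟩
  loopless := by constructor; rintro ⟨i, s⟩ (⟨_, h⟩ | ⟨h, _⟩) <;> exact h rfl

/-- The `k`-th power of the path on `n` vertices: `i ~ j` iff `1 ≤ |i-j| ≤ k`. -/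
def pathPow (n k : ℕ) : SimpleGraph (Fin n) where
  Adj i j := i ≠ j ∧ (i : ℕ) ≤ (j : ℕ) + k ∧ (j : ℕ) ≤ (i : ℕ) + k
  symm := by constructor; intro i j h; exact ⟨h.1.symm, h.2.2, h.2.1⟩
  loopless := by constructor; intro i h; exact h.1 rfl

/-- The cycle on `m` vertices (for `m ≥ 3`), modeled on `ZMod m`. -/
def cyc (m : ℕ) : SimpleGraph (ZMod m) where
  Adj i j := i ≠ j ∧ (i + 1 = j ∨ j + 1 = i)
  symm := by constructor; intro i j h; exact ⟨h.1.symm, h.2.symm⟩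
  loopless := by constructor; intro i h; exact h.1 rfl

/-- The graph `D₁`: a `9`-cycle `x₁x₂…x₉` plus chords `x₁x₃, x₄x₆, x₇x₉`
(vertex `xᵢ` is represented by `i - 1 : ZMod 9`). -/
def DGraph : SimpleGraph (ZMod 9) where
  Adj i j := i ≠ j ∧ (i + 1 = j ∨ j + 1 = i ∨
    (i = 0 ∧ j = 2) ∨ (i = 2 ∧ j = 0) ∨ (i = 3 ∧ j = 5) ∨ (i = 5 ∧ j = 3) ∨
    (i = 6 ∧ j = 8) ∨ (i = 8 ∧ j = 6))
  symm := by constructor; intro i j h; refine ⟨h.1.symm, ?_⟩; tauto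
  loopless := by constructor; intro i h; exact h.1 rfl


section Aux

variable {W : Type*} [Fintype W]

lemma mem_cnbhd_iff {G : SimpleGraph W} {u v : W} :
    u ∈ cnbhd G v ↔ u = v ∨ G.Adj v u := by
  simp [cnbhd]

lemma mem_cnbhd_comm {G : SimpleGraph W} {u v : W} :
    u ∈ cnbhd G v ↔ v ∈ cnbhd G u := by
  simp only [mem_cnbhd_iff]
  constructor
  · rintro (h | h)
    · exact Or.inl h.symm
    · exact Or.inr h.symm
  · rintro (h | h)
    · exact Or.inl h.symm
    · exact Or.inr h.symm

lemma self_mem_cnbhd {G : SimpleGraph W} (v : W) : v ∈ cnbhd G v :=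
  Finset.mem_insert_self _ _

lemma mem_undom_iff {G : SimpleGraph W} {D : Finset W} {u : W} :
    u ∈ undom G D ↔ ∀ v ∈ D, u ∉ cnbhd G v := by
  simp [undom]

lemma dominates_of_undom_empty {G : SimpleGraph W} {D : Finset W}
    (h : ¬ (undom G D).Nonempty) : Dominates G D := by
  intro u
  by_contra hc
  push_neg at hc
  exact h ⟨u, mem_undom_iff.2 hc⟩

/-- A partial Grundy (dominating) sequence. -/
def PartialSeq (G : SimpleGraph W) (l : List W) : Prop :=
  ∀ i : Fin l.length, ∃ u, u ∈ cnbhd G (l.get i) ∧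
    ∀ j : Fin l.length, (j : ℕ) < (i : ℕ) → u ∉ cnbhd G (l.get j)

lemma partialSeq_append {G : SimpleGraph W} {l : List W} {v u : W}
    (hl : PartialSeq G l) (hu : u ∈ cnbhd G v)
    (hnew : ∀ j : Fin l.length, u ∉ cnbhd G (l.get j)) :
    PartialSeq G (l ++ [v]) := by
  intro i
  have hlen : (l ++ [v]).length = l.length + 1 := by simp
  by_cases hi : (i : ℕ) < l.length
  · obtain ⟨w, hw1, hw2⟩ := hl ⟨i, hi⟩
    have hgi : (l ++ [v]).get i = l.get ⟨i, hi⟩ := by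
      simp [List.get_eq_getElem, List.getElem_append_left hi]
    refine ⟨w, by rw [hgi]; exact hw1, ?_⟩
    intro j hj
    have hj' : (j : ℕ) < l.length := lt_trans hj hi
    have hgj : (l ++ [v]).get j = l.get ⟨j, hj'⟩ := by
      simp [List.get_eq_getElem, List.getElem_append_left hj']
    rw [hgj]
    exact hw2 ⟨j, hj'⟩ hj
  · have hi2 : (i : ℕ) < l.length + 1 := lt_of_lt_of_eq i.2 hlen
    have hi' : (i : ℕ) = l.length := by omega
    have hgi : (l ++ [v]).get i = v := by
      simp [List.get_eq_getElem, List.getElem_append_right (le_of_eq hi'.symm), hi']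
    refine ⟨u, by rw [hgi]; exact hu, ?_⟩
    intro j hj
    have hj' : (j : ℕ) < l.length := by omega
    have hgj : (l ++ [v]).get j = l.get ⟨j, hj'⟩ := by
      simp [List.get_eq_getElem, List.getElem_append_left hj']
    rw [hgj]
    exact hnew ⟨j, hj'⟩

lemma partialSeq_nodup {G : SimpleGraph W} {l : List W} (hl : PartialSeq G l) :
    l.Nodup := by
  rw [List.nodup_iff_injective_get]
  intro i j hij
  by_contra hne
  rcases lt_or_gt_of_ne (fun h : (i : ℕ) = (j : ℕ) => hne (Fin.ext h)) with h | h
  · obtain ⟨u, hu1, hu2⟩ := hl j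
    exact hu2 i h (hij ▸ hu1)
  · obtain ⟨u, hu1, hu2⟩ := hl i
    exact hu2 j h (hij.symm ▸ hu1)

lemma mem_toFinset_get {l : List W} {w : W} (hw : w ∈ l.toFinset) :
    ∃ j : Fin l.length, l.get j = w := by
  rw [List.mem_toFinset] at hw
  obtain ⟨j, hj⟩ := List.get_of_mem hw
  exact ⟨j, hj⟩

lemma extend_aux {G : SimpleGraph W} :
    ∀ (m : ℕ) (l : List W), (undom G l.toFinset).card ≤ m → PartialSeq G l →
      ∃ l', PartialSeq G l' ∧ Dominates G l'.toFinset ∧ l.length ≤ l'.length := by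
  intro m
  induction m with
  | zero =>
    intro l hcard hl
    refine ⟨l, hl, ?_, le_refl _⟩
    apply dominates_of_undom_empty
    intro hne
    have := Finset.card_pos.2 hne
    omega
  | succ n ih =>
    intro l hcard hl
    by_cases h : (undom G l.toFinset).Nonempty
    · obtain ⟨u, hu⟩ := h
      have hnew : ∀ j : Fin l.length, u ∉ cnbhd G (l.get j) := by
        intro j
        exact mem_undom_iff.1 hu _ (List.mem_toFinset.2 (l.get_mem j))
      have hps : PartialSeq G (l ++ [u]) :=
        partialSeq_append hl (self_mem_cnbhd u) hnew
      have hsub : undom G (l ++ [u]).toFinset ⊆ (undom G l.toFinset).erase u := by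
        intro w hw
        rw [mem_undom_iff] at hw
        have hwt : ∀ v ∈ l.toFinset, w ∉ cnbhd G v := by
          intro v hv
          exact hw v (by simp [hv])
        have hwu : w ∉ cnbhd G u := hw u (by simp)
        refine Finset.mem_erase.2 ⟨?_, mem_undom_iff.2 hwt⟩
        intro hwe
        rw [hwe] at hwu
        exact hwu (self_mem_cnbhd u)
      have hcard' : (undom G (l ++ [u]).toFinset).card ≤ n := by
        have h1 := Finset.card_le_card hsub
        have h2 := Finset.card_erase_of_mem hu
        omega
      obtain ⟨l', h1, h2, h3⟩ := ih (l ++ [u]) hcard' hps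
      refine ⟨l', h1, h2, ?_⟩
      have : (l ++ [u]).length = l.length + 1 := by simp
      omega
    · exact ⟨l, hl, dominates_of_undom_empty h, le_refl _⟩

lemma isDominatingSeq_iff {G : SimpleGraph W} {l : List W} :
    IsDominatingSeq G l ↔ PartialSeq G l ∧ Dominates G l.toFinset :=
  Iff.rfl

lemma grundy_bddAbove {G : SimpleGraph W} :
    ∀ k ∈ {k | ∃ l : List W, IsDominatingSeq G l ∧ l.length = k},
      k ≤ Fintype.card W := by
  rintro k ⟨l, ⟨hps, _⟩, rfl⟩
  have := partialSeq_nodup (G := G) hps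
  simpa using List.Nodup.length_le_card this

lemma len_le_grundy {G : SimpleGraph W} {l : List W} (hl : PartialSeq G l) :
    l.length ≤ grundyDomNum G := by
  obtain ⟨l', h1, h2, h3⟩ := extend_aux (undom G l.toFinset).card l (le_refl _) hl
  have hmem : l'.length ∈ {k | ∃ l : List W, IsDominatingSeq G l ∧ l.length = k} :=
    ⟨l', ⟨h1, h2⟩, rfl⟩
  have hbdd : BddAbove {k | ∃ l : List W, IsDominatingSeq G l ∧ l.length = k} :=
    ⟨Fintype.card W, fun k hk => grundy_bddAbove k hk⟩
  exact le_trans h3 (le_csSup hbdd hmem)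

lemma giAux_le_grundy {G : SimpleGraph W} :
    ∀ (fuel : ℕ) (l : List W), PartialSeq G l →
      giAux G fuel l.toFinset + l.length ≤ grundyDomNum G := by
  intro fuel
  induction fuel with
  | zero =>
    intro l hl
    simpa [giAux] using len_le_grundy hl
  | succ n ih =>
    intro l hl
    simp only [giAux]
    split
    case isTrue h =>
      obtain ⟨u0, hu0⟩ := h
      refine le_trans (Nat.add_le_add_right (Finset.inf'_le _ hu0) _) ?_
      obtain ⟨v, hv, hveq⟩ := Finset.exists_mem_eq_sup' (⟨u0, self_mem_cnbhd u0⟩ :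
        (cnbhd G u0).Nonempty) (fun v => giAux G n (insert v l.toFinset) + 1)
      rw [hveq]
      have hu0v : u0 ∈ cnbhd G v := mem_cnbhd_comm.1 hv
      have hnew : ∀ j : Fin l.length, u0 ∉ cnbhd G (l.get j) := by
        intro j
        exact mem_undom_iff.1 hu0 _ (List.mem_toFinset.2 (l.get_mem j))
      have hps : PartialSeq G (l ++ [v]) := partialSeq_append hl hu0v hnew
      have hIH := ih (l ++ [v]) hps
      have hfin : (l ++ [v]).toFinset = insert v l.toFinset := by
        ext x; simp [or_comm]
      rw [hfin] at hIH
      have hlen : (l ++ [v]).length = l.length + 1 := by simp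
      omega
    case isFalse h =>
      simpa using len_le_grundy hl

lemma grundy_le_sub {G : SimpleGraph W} :
    grundyDomNum G ≤ Fintype.card W - G.minDegree := by
  apply csSup_le'
  rintro k ⟨l, ⟨hps, _⟩, rfl⟩
  rcases Nat.eq_zero_or_pos l.length with h0 | hpos
  · simp [h0]
  set m := l.length - 1 with hm
  have hml : m < l.length := by omega
  obtain ⟨u, hu1, hu2⟩ := hps ⟨m, hml⟩
  -- the first m vertices of l are outside cnbhd G u
  set T : Finset W := Finset.image (fun j : Fin m => l.get (j.castLE (by omega))) Finset.univ
    with hT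
  have hnodup := partialSeq_nodup hps
  have hinj : Function.Injective (l.get) := List.nodup_iff_injective_get.1 hnodup
  have hTcard : T.card = m := by
    rw [hT, Finset.card_image_of_injective _ ?_, Finset.card_univ, Fintype.card_fin]
    intro a b hab
    have := hinj hab
    exact Fin.ext (by simpa using congrArg Fin.val this)
  have hdisj : Disjoint T (cnbhd G u) := by
    rw [Finset.disjoint_left]
    rintro w hw hw2
    rw [hT, Finset.mem_image] at hw
    obtain ⟨j, _, rfl⟩ := hw
    have : (j : ℕ) < m := j.2
    exact hu2 (j.castLE (by omega)) (by simpa using this) (mem_cnbhd_comm.1 hw2)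
  have hcn : (cnbhd G u).card = G.degree u + 1 := by
    rw [cnbhd, Finset.card_insert_of_notMem (by simp), SimpleGraph.card_neighborFinset_eq_degree]
  have hunion : (T ∪ cnbhd G u).card = m + (G.degree u + 1) := by
    rw [Finset.card_union_of_disjoint hdisj, hTcard, hcn]
  have hle : (T ∪ cnbhd G u).card ≤ Fintype.card W := Finset.card_le_univ _
  have hmin : G.minDegree ≤ G.degree u := by
    have : Nonempty W := ⟨u⟩
    exact G.minDegree_le_degree u
  omega

end Aux

/-- `γᵢ(G) ≤ γ_gr(G) ≤ n(G) - δ(G)`. -/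
theorem stmt6 {V : Type*} [Fintype V] (G : SimpleGraph V) :
    indicatedDomNum G ≤ grundyDomNum G ∧
      grundyDomNum G ≤ Fintype.card V - G.minDegree := by
  constructor
  · have h := giAux_le_grundy (G := G) (Fintype.card V) []
    simp only [List.toFinset_nil, List.length_nil, add_zero] at h
    exact h (by intro i; exact absurd i.2 (by simp))
  · exact grundy_le_sub

end IndicatedDom
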